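/- Define S*(x,y)v = η̃(y)η̃(v)x - η̃(x)η̃(v)y + g(y,v)η̃(x)ξ̃ - g(x,v)η̃(y)ξ̃ and S_*(x,y)v = -g(φy,φv)φ²x + g(φx,φv)φ²y on a Lorentz g.f.f-structure with s = 2, ξ_1 timelike. Then for any u = ξ_1 + x₁ with x₁ ∈ Im φ, g(x₁,x₁)=1, and any y ∈ Im φ ∩ u^⊥: g(S*(u,y)u, y) = g(S_*(u,y)u, y). -/

import Mathlib

open RealInnerProductSpace

noncomputable section

variable {W : Type*} [NormedAddCommGroup W] [InnerProductSpace ℝ W]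

/-- The Lorentz metric on `V = Im φ ⊕ span{ξ₁,ξ₂}`, modeled as `W × ℝ × ℝ` with
`Im φ = W` (where `g` is positive definite), `ξ₁ = (0,1,0)` timelike and
`ξ₂ = (0,0,1)` spacelike. -/
def lg (v w : W × ℝ × ℝ) : ℝ := ⟪v.1, w.1⟫ - v.2.1 * w.2.1 + v.2.2 * w.2.2

/-- `η̃ = ε₁ η¹ + ε₂ η² = -η¹ + η²`. -/
def etat (v : W × ℝ × ℝ) : ℝ := -v.2.1 + v.2.2

/-- `ξ̃ = ξ₁ + ξ₂`. -/
def xit : W × ℝ × ℝ := (0, 1, 1)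

/-- `S*(x,y)v = η̃(y)η̃(v)x - η̃(x)η̃(v)y + g(y,v)η̃(x)ξ̃ - g(x,v)η̃(y)ξ̃`. -/
def Sstar (x y v : W × ℝ × ℝ) : W × ℝ × ℝ :=
  (etat y * etat v) • x - (etat x * etat v) • y
    + (lg y v * etat x) • xit - (lg x v * etat y) • xit

/-- `S_*(x,y)v = -g(φy,φv)φ²x + g(φx,φv)φ²y`. -/
def Sund (φ : (W × ℝ × ℝ) →ₗ[ℝ] (W × ℝ × ℝ)) (x y v : W × ℝ × ℝ) : W × ℝ × ℝ :=
  -(lg (φ y) (φ v)) • (φ (φ x)) + (lg (φ x) (φ v)) • (φ (φ y))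

/-- Remark 5.5: On a Lorentz g.f.f-structure with `s = 2` and `ξ₁`
timelike, for any `u = ξ₁ + x₁` with `x₁ ∈ Im φ`, `g(x₁,x₁) = 1`, and any
`y ∈ Im φ ∩ u^⊥`:  `g(S*(u,y)u, y) = g(S_*(u,y)u, y)`. -/
theorem Sstar_eq_Sund_on_null_congruence
    (φ : (W × ℝ × ℝ) →ₗ[ℝ] (W × ℝ × ℝ))
    (hφIm : ∀ v : W × ℝ × ℝ, (φ v).2 = (0, 0))
    (hφ2 : ∀ v : W × ℝ × ℝ, φ (φ v) = (-v.1, 0, 0))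
    (hφg : ∀ a b : W × ℝ × ℝ, lg (φ a) (φ b) = ⟪a.1, b.1⟫)
    (x₁ : W) (hx₁ : ⟪x₁, x₁⟫ = 1)
    (y : W) (hy : lg ((y, 0, 0) : W × ℝ × ℝ) ((x₁, 1, 0) : W × ℝ × ℝ) = 0) :
    lg (Sstar ((x₁, 1, 0) : W × ℝ × ℝ) ((y, 0, 0) : W × ℝ × ℝ) ((x₁, 1, 0) : W × ℝ × ℝ))
        ((y, 0, 0) : W × ℝ × ℝ) =
    lg (Sund φ ((x₁, 1, 0) : W × ℝ × ℝ) ((y, 0, 0) : W × ℝ × ℝ)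
        ((x₁, 1, 0) : W × ℝ × ℝ)) ((y, 0, 0) : W × ℝ × ℝ) := by
  have hyx : ⟪y, x₁⟫ = 0 := by simpa [lg] using hy
  simp [Sstar, Sund, lg, etat, xit, hφ2, hφg, hyx, hx₁, inner_smul_left,
    inner_sub_left, inner_add_left, inner_neg_left, real_inner_comm y x₁, hyx, hφIm]
  have h1 : ⟪(φ ((x₁, 1, 0) : W × ℝ × ℝ)).1, (φ ((x₁, 1, 0) : W × ℝ × ℝ)).1⟫ = 1 := by
    have := hφg ((x₁, 1, 0) : W × ℝ × ℝ) ((x₁, 1, 0) : W × ℝ × ℝ)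
    simp only [lg, hφIm] at this
    linarith
  rw [real_inner_self_eq_norm_sq] at h1
  rw [h1]; ring
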